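/- Define U(r) = log[(1−F_h(1/(1+e^r)))/(1−F_ℓ(1/(1+e^r)))], where F_ℓ, F_h are CDFs on [0,1] with dF_h/dF_ℓ(q) = q/(1−q), F = (F_ℓ+F_h)/2 and F(q) = Θ(q^α) as q → 0 for some α > 0. Then U(r) = Θ(e^{−αr}) as r → ∞, i.e., 0 < liminf_{r→∞} U(r)e^{αr} ≤ limsup_{r→∞} U(r)e^{αr} < ∞; moreover lim_{r→∞} U(r)/(2F(1/(1+e^r))) = 1. -/

import Mathlib

open MeasureTheory Set Filter

private lemma log_ratio_bounds {a b : ℝ} (hb0 : 0 ≤ b) (hba : b ≤ a) (ha : a ≤ 1/2) :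
    0 ≤ Real.log ((1-b)/(1-a)) ∧
    Real.log ((1-b)/(1-a)) * (1-a) ≤ a - b ∧
    a - b ≤ Real.log ((1-b)/(1-a)) := by
  have h1a : (0:ℝ) < 1 - a := by linarith
  have h1b : (0:ℝ) < 1 - b := by linarith
  have ht : (1:ℝ) ≤ (1-b)/(1-a) := (one_le_div h1a).mpr (by linarith)
  have htpos : (0:ℝ) < (1-b)/(1-a) := by linarith
  refine ⟨Real.log_nonneg ht, ?_, ?_⟩
  · have h := Real.log_le_sub_one_of_pos htpos
    have := mul_le_mul_of_nonneg_right h h1a.le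
    calc Real.log ((1-b)/(1-a)) * (1-a) ≤ ((1-b)/(1-a) - 1) * (1-a) := this
      _ = a - b := by field_simp; ring
  · have h2 := Real.log_le_sub_one_of_pos (inv_pos.mpr htpos)
    rw [Real.log_inv] at h2
    have hinv : ((1-b)/(1-a))⁻¹ = (1-a)/(1-b) := by
      rw [inv_div]
    rw [hinv] at h2
    have key : (1:ℝ) - (1-a)/(1-b) = (a-b)/(1-b) := by field_simp; ring
    have h3 : (a-b)/1 ≤ (a-b)/(1-b) :=
      div_le_div_of_nonneg_left (by linarith) h1b (by linarith)
    rw [div_one] at h3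
    linarith

set_option maxHeartbeats 1000000 in
theorem stmt6 (μℓ μh : Measure ℝ) [IsProbabilityMeasure μℓ] [IsProbabilityMeasure μh]
    (hsupp : μℓ (Set.Icc (0:ℝ) 1)ᶜ = 0)
    (hRN : μh = μℓ.withDensity fun q => ENNReal.ofReal (q / (1 - q)))
    (Fℓ Fh F : ℝ → ℝ)
    (hFℓ : ∀ q, Fℓ q = (μℓ (Set.Iic q)).toReal)
    (hFh : ∀ q, Fh q = (μh (Set.Iic q)).toReal)
    (hF : ∀ q, F q = (Fℓ q + Fh q) / 2)
    (α : ℝ) (hα : 0 < α)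
    (htail : ∃ c C q₀ : ℝ, 0 < c ∧ c ≤ C ∧ 0 < q₀ ∧
      ∀ q ∈ Set.Ioo (0:ℝ) q₀, c * q ^ α ≤ F q ∧ F q ≤ C * q ^ α)
    (U : ℝ → ℝ)
    (hU : ∀ r, U r = Real.log
      ((1 - Fh (1 / (1 + Real.exp r))) / (1 - Fℓ (1 / (1 + Real.exp r))))) :
    (∃ c C : ℝ, 0 < c ∧ c ≤ C ∧ ∀ᶠ r in atTop,
      c ≤ U r * Real.exp (α * r) ∧ U r * Real.exp (α * r) ≤ C) ∧
    Tendsto (fun r => U r / (2 * F (1 / (1 + Real.exp r)))) atTop (nhds 1) := by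
  obtain ⟨c, C, q₀, hc, hcC, hq₀, htail⟩ := htail
  have hC : 0 < C := hc.trans_le hcC
  set qf : ℝ → ℝ := fun r => 1 / (1 + Real.exp r) with hqf
  have hq_pos : ∀ r, 0 < qf r := fun r => by
    have := Real.exp_pos r; positivity
  -- q → 0
  have hdenom : Tendsto (fun r => 1 + Real.exp r) atTop atTop :=
    tendsto_atTop_add_const_left _ 1 Real.tendsto_exp_atTop
  have hq0 : Tendsto qf atTop (nhds 0) := by
    refine hdenom.inv_tendsto_atTop.congr (fun r => ?_)
    simp [hqf]
  -- q^α → 0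
  have hqa0 : Tendsto (fun r => qf r ^ α) atTop (nhds 0) := by
    have hca : ContinuousAt (fun x : ℝ => x ^ α) 0 :=
      Real.continuousAt_rpow_const 0 α (Or.inr hα.le)
    have := hca.tendsto.comp hq0
    simpa [Real.zero_rpow hα.ne', Function.comp_def] using this
  -- measure comparison: Fh q ≤ 2 q Fℓ q for 0 < q < 1/2
  have hmeasure : ∀ q : ℝ, 0 < q → q < 1/2 → Fh q ≤ 2*q * Fℓ q := by
    intro q hq hq2
    have hIic : μh (Set.Iic q) ≤ ENNReal.ofReal (2*q) * μℓ (Set.Iic q) := by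
      rw [hRN, withDensity_apply _ measurableSet_Iic]
      calc ∫⁻ x in Set.Iic q, ENNReal.ofReal (x/(1-x)) ∂μℓ
          ≤ ∫⁻ _x in Set.Iic q, ENNReal.ofReal (2*q) ∂μℓ := by
            refine setLIntegral_mono measurable_const fun x hx => ?_
            refine ENNReal.ofReal_le_ofReal ?_
            rcases le_or_gt x 0 with h | h
            · have h1 : x/(1-x) ≤ 0 :=
                div_nonpos_of_nonpos_of_nonneg h (by simp at hx; linarith)
              linarith
            · have hxq : x ≤ q := hx
              have h1 : x/(1-x) ≤ q/(1-q) :=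
                div_le_div₀ (by linarith) hxq (by linarith) (by linarith)
              have h2 : q/(1-q) ≤ 2*q := by
                rw [div_le_iff₀ (by linarith)]; nlinarith
              linarith
        _ = ENNReal.ofReal (2*q) * μℓ (Set.Iic q) := setLIntegral_const _ _
    have hmono := ENNReal.toReal_mono
      (ENNReal.mul_ne_top ENNReal.ofReal_ne_top (measure_ne_top μℓ _)) hIic
    rw [ENNReal.toReal_mul, ENNReal.toReal_ofReal (by linarith)] at hmono
    rw [hFh q, hFℓ q]
    exact hmono
  -- the key eventual package
  have hev : ∀ᶠ r in atTop,
      0 < U r * Real.exp (α * r) ∧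
      (c/2) * (1/2:ℝ) ^ α ≤ U r * Real.exp (α * r) ∧
      U r * Real.exp (α * r) ≤ 4*C ∧
      (1 - 2*qf r)/(1 + 2*qf r) ≤ U r / (2 * F (qf r)) ∧
      U r / (2 * F (qf r)) ≤ (1 - 2*C*(qf r)^α)⁻¹ := by
    have e1 : ∀ᶠ r in atTop, qf r < q₀ := hq0.eventually_lt_const hq₀
    have e2 : ∀ᶠ r in atTop, qf r < 1/4 := hq0.eventually_lt_const (by norm_num)
    have e3 : ∀ᶠ r in atTop, 2*C*(qf r)^α < 1/2 := by
      have : Tendsto (fun r => 2*C*(qf r)^α) atTop (nhds 0) := by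
        simpa using hqa0.const_mul (2*C)
      exact this.eventually_lt_const (by norm_num)
    have e4 : ∀ᶠ r in atTop, (1:ℝ) ≤ Real.exp r :=
      (eventually_ge_atTop 0).mono fun r hr => by
        simpa using Real.exp_le_exp.mpr hr
    filter_upwards [e1, e2, e3, e4] with r h1 h2 h3 h4
    set q := qf r with hqd
    have hqpos : 0 < q := hq_pos r
    have hq4 : q < 1/4 := h2
    -- tail bounds
    obtain ⟨htl1, htl2⟩ := htail q ⟨hqpos, h1⟩
    have hqα : 0 < q ^ α := Real.rpow_pos_of_pos hqpos α
    -- set a b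
    set a := Fℓ q with had
    set b := Fh q with hbd
    have ha0 : 0 ≤ a := by rw [had, hFℓ]; exact ENNReal.toReal_nonneg
    have hb0 : 0 ≤ b := by rw [hbd, hFh]; exact ENNReal.toReal_nonneg
    have hba2q : b ≤ 2*q*a := hmeasure q hqpos (by linarith)
    have hba : b ≤ a := by nlinarith
    have h2F : 2 * F q = a + b := by rw [hF]; ring
    have hF2 : F q ≤ a := by linarith
    have haF : a ≤ 2 * F q := by linarith
    have haC : a ≤ 2*C*q^α := by nlinarith
    have hahalf : a ≤ 1/2 := by linarith
    have hFpos : 0 < F q := lt_of_lt_of_le (by positivity) htl1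
    have hUr : U r = Real.log ((1-b)/(1-a)) := hU r
    obtain ⟨hU0, hUup, hUlow⟩ := log_ratio_bounds hb0 hba hahalf
    rw [← hUr] at hU0 hUup hUlow
    -- basic consequences
    have hUle : U r ≤ 4*C*q^α := by nlinarith
    have hUge : (c/2) * q^α ≤ U r := by nlinarith
    -- exp algebra
    have hexp : Real.exp (α * r) = Real.exp r ^ α := by
      rw [mul_comm, Real.exp_mul]
    have hqe : q * Real.exp r = Real.exp r / (1 + Real.exp r) := by
      rw [hqd, hqf]
      field_simp
    have hqe_lo : (1/2:ℝ) ≤ q * Real.exp r := by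
      rw [hqe, le_div_iff₀ (by positivity)]
      linarith
    have hqe_hi : q * Real.exp r ≤ 1 := by
      rw [hqe, div_le_one (by positivity)]
      linarith
    have hmulr : q^α * Real.exp (α * r) = (q * Real.exp r)^α := by
      rw [hexp, ← Real.mul_rpow hqpos.le (Real.exp_pos r).le]
    have hrp_lo : (1/2:ℝ)^α ≤ (q * Real.exp r)^α :=
      Real.rpow_le_rpow (by norm_num) hqe_lo hα.le
    have hrp_hi : (q * Real.exp r)^α ≤ 1 :=
      Real.rpow_le_one (by linarith) hqe_hi hα.le
    have hexppos : 0 < Real.exp (α * r) := Real.exp_pos _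
    have hUpos : 0 < U r := lt_of_lt_of_le (by positivity) hUge
    constructor
    · exact mul_pos hUpos hexppos
    constructor
    · -- lower bound
      have step := mul_le_mul_of_nonneg_right hUge hexppos.le
      calc (c/2) * (1/2:ℝ)^α ≤ (c/2) * (q * Real.exp r)^α := by
            nlinarith
        _ = (c/2) * q^α * Real.exp (α * r) := by rw [mul_assoc, hmulr]
        _ ≤ U r * Real.exp (α * r) := step
    constructor
    · -- upper bound
      have step := mul_le_mul_of_nonneg_right hUle hexppos.le
      calc U r * Real.exp (α * r) ≤ 4*C*q^α * Real.exp (α*r) := step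
        _ = 4*C * (q*Real.exp r)^α := by rw [mul_assoc, hmulr]
        _ ≤ 4*C := by nlinarith
    constructor
    · -- squeeze lower
      rw [div_le_div_iff₀ (by linarith) (by linarith)]
      nlinarith [mul_le_mul_of_nonneg_right hUlow (show (0:ℝ) ≤ 1 + 2*q by linarith)]
    · -- squeeze upper
      have hd : (0:ℝ) < 1 - 2*C*q^α := by linarith
      rw [← one_div, div_le_div_iff₀ (by linarith) hd]
      have s1 : U r * (1 - 2*C*q^α) ≤ U r * (1-a) :=
        mul_le_mul_of_nonneg_left (by linarith) hU0
      nlinarith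
  constructor
  · refine ⟨(c/2) * (1/2:ℝ)^α, 4*C, by positivity, ?_, ?_⟩
    · have hle1 : (1/2:ℝ)^α ≤ 1 := Real.rpow_le_one (by norm_num) (by norm_num) hα.le
      nlinarith
    · filter_upwards [hev] with r hr
      exact ⟨hr.2.1, hr.2.2.1⟩
  · -- squeeze to 1
    have ha1 : Tendsto (fun r => 1 - 2*qf r) atTop (nhds 1) := by
      have h := (tendsto_const_nhds : Tendsto (fun _ : ℝ => (1:ℝ)) atTop (nhds 1)).sub
        (hq0.const_mul 2)
      simp only [mul_zero, sub_zero] at h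
      exact h
    have hb1 : Tendsto (fun r => 1 + 2*qf r) atTop (nhds 1) := by
      have h := (tendsto_const_nhds : Tendsto (fun _ : ℝ => (1:ℝ)) atTop (nhds 1)).add
        (hq0.const_mul 2)
      simp only [mul_zero, add_zero] at h
      exact h
    have t1 : Tendsto (fun r => (1 - 2*qf r)/(1 + 2*qf r)) atTop (nhds 1) := by
      have := ha1.div hb1 one_ne_zero
      rw [div_one] at this
      exact this
    have t2 : Tendsto (fun r => (1 - 2*C*(qf r)^α)⁻¹) atTop (nhds 1) := by
      have ha2 : Tendsto (fun r => 1 - 2*C*(qf r)^α) atTop (nhds 1) := by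
        have h := (tendsto_const_nhds : Tendsto (fun _ : ℝ => (1:ℝ)) atTop (nhds 1)).sub
          (hqa0.const_mul (2*C))
        simp only [mul_zero, sub_zero] at h
        exact h
      have := ha2.inv₀ one_ne_zero
      rw [inv_one] at this
      exact this
    refine tendsto_of_tendsto_of_tendsto_of_le_of_le' t1 t2 ?_ ?_
    · filter_upwards [hev] with r hr
      exact hr.2.2.2.1
    · filter_upwards [hev] with r hr
      exact hr.2.2.2.2
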